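/- arXiv:0812.4206 — 7 statements merged into one kernel-verified Lean document; each statement's English description precedes it below -/
import Mathlib

section
/- For every integer n ≥ 2 and all real numbers x_2, …, x_n: Σ_{ℓ=1}^{n} (1/ℓ) · Σ_{S ⊆ {2,…,n}, |S| = ℓ−1} (∏_{i ∈ S} x_i) · (∏_{i ∈ {2,…,n}∖S} (1 − x_i)) = Σ_{ℓ=1}^{n} ((−1)^{ℓ−1}/ℓ) · Σ_{S ⊆ {2,…,n}, |S| = ℓ−1} ∏_{i ∈ S} x_i. -/
open Finset

private lemma prod_expand (T : Finset ℕ) (x : ℕ → ℝ) (t : ℝ) :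
    ∏ i ∈ T, (t * x i + (1 - x i))
      = ∑ S ∈ T.powerset, t ^ S.card * ((∏ i ∈ S, x i) * ∏ i ∈ T \ S, (1 - x i)) := by
  rw [Finset.prod_add]
  refine Finset.sum_congr rfl fun S hS => ?_
  rw [Finset.prod_mul_distrib, Finset.prod_const, mul_assoc]

private lemma prod_expand' (T : Finset ℕ) (x : ℕ → ℝ) (t : ℝ) :
    ∏ i ∈ T, (t * x i + (1 - x i))
      = ∑ S ∈ T.powerset, ((-1 : ℝ) ^ S.card * (1 - t) ^ S.card) * ∏ i ∈ S, x i := by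
  have h : ∀ i ∈ T, t * x i + (1 - x i) = (-1 * ((1 - t) * x i)) + 1 := by
    intro i _; ring
  rw [Finset.prod_congr rfl h, Finset.prod_add]
  refine Finset.sum_congr rfl fun S hS => ?_
  have h2 : ∏ i ∈ S, (-1 * ((1 - t) * x i))
      = ((-1 : ℝ) ^ S.card * (1 - t) ^ S.card) * ∏ i ∈ S, x i := by
    rw [Finset.prod_mul_distrib, Finset.prod_mul_distrib, Finset.prod_const,
      Finset.prod_const, mul_assoc]
  rw [Finset.prod_const_one, mul_one, h2]

private lemma key (T : Finset ℕ) (x : ℕ → ℝ) :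
    ∑ S ∈ T.powerset, (1 / ((S.card : ℝ) + 1)) * ((∏ i ∈ S, x i) * ∏ i ∈ T \ S, (1 - x i))
    = ∑ S ∈ T.powerset, ((-1 : ℝ) ^ S.card / ((S.card : ℝ) + 1)) * ∏ i ∈ S, x i := by
  have hInt : ∀ m : ℕ, (∫ t in (0:ℝ)..1, t ^ m) = 1 / ((m : ℝ) + 1) := by
    intro m; rw [integral_pow]; simp
  have hInt' : ∀ m : ℕ, (∫ t in (0:ℝ)..1, (1 - t) ^ m) = 1 / ((m : ℝ) + 1) := by
    intro m
    have h := intervalIntegral.integral_comp_sub_left (a := (0:ℝ)) (b := 1)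
      (fun u => u ^ m) 1
    simpa [hInt m] using h
  have h1 : ∀ S ∈ T.powerset,
      (1 / ((S.card : ℝ) + 1)) * ((∏ i ∈ S, x i) * ∏ i ∈ T \ S, (1 - x i))
      = ∫ t in (0:ℝ)..1, t ^ S.card * ((∏ i ∈ S, x i) * ∏ i ∈ T \ S, (1 - x i)) := by
    intro S _
    rw [intervalIntegral.integral_mul_const, hInt, mul_comm]
  have h2 : ∀ S ∈ T.powerset,
      ((-1 : ℝ) ^ S.card / ((S.card : ℝ) + 1)) * ∏ i ∈ S, x i
      = ∫ t in (0:ℝ)..1, ((-1 : ℝ) ^ S.card * (1 - t) ^ S.card) * ∏ i ∈ S, x i := by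
    intro S _
    rw [intervalIntegral.integral_mul_const, intervalIntegral.integral_const_mul, hInt']
    ring
  rw [Finset.sum_congr rfl h1, Finset.sum_congr rfl h2,
    ← intervalIntegral.integral_finset_sum
      (fun S _ => Continuous.intervalIntegrable (by fun_prop) _ _),
    ← intervalIntegral.integral_finset_sum
      (fun S _ => Continuous.intervalIntegrable (by fun_prop) _ _)]
  simp only [← prod_expand, ← prod_expand']

/-- for every integer `n ≥ 2` and reals `x_2, …, x_n`,
`Σ_{ℓ=1}^{n} (1/ℓ) Σ_{S ⊆ {2,…,n}, |S|=ℓ−1} (∏_{i∈S} x_i)(∏_{i∈{2,…,n}∖S} (1−x_i))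
 = Σ_{ℓ=1}^{n} ((−1)^{ℓ−1}/ℓ) Σ_{S ⊆ {2,…,n}, |S|=ℓ−1} ∏_{i∈S} x_i`. -/
theorem combinatorial_identity (n : ℕ) (hn : 2 ≤ n) (x : ℕ → ℝ) :
    ∑ l ∈ Finset.Icc 1 n, (1 / (l : ℝ)) *
        ∑ S ∈ (Finset.Icc 2 n).powersetCard (l - 1),
          (∏ i ∈ S, x i) * ∏ i ∈ Finset.Icc 2 n \ S, (1 - x i)
    = ∑ l ∈ Finset.Icc 1 n, ((-1 : ℝ) ^ (l - 1) / (l : ℝ)) *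
        ∑ S ∈ (Finset.Icc 2 n).powersetCard (l - 1), ∏ i ∈ S, x i := by
  have hcard : (Finset.Icc 2 n).card + 1 = n := by
    rw [Nat.card_Icc]; omega
  have reindex : ∀ (c : ℕ → ℝ) (g : Finset ℕ → ℝ),
      ∑ l ∈ Finset.Icc 1 n, c l * ∑ S ∈ (Finset.Icc 2 n).powersetCard (l - 1), g S
      = ∑ S ∈ (Finset.Icc 2 n).powerset, c (S.card + 1) * g S := by
    intro c g
    rw [← Finset.Ico_add_one_right_eq_Icc, Finset.sum_Ico_eq_sum_range,
      Finset.sum_powerset (Finset.Icc 2 n) (fun S => c (S.card + 1) * g S)]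
    simp only [Nat.succ_sub_one, hcard]
    refine Finset.sum_congr rfl fun j _ => ?_
    rw [Nat.add_sub_cancel_left, Finset.mul_sum]
    refine Finset.sum_congr rfl fun S hS => ?_
    rw [(Finset.mem_powersetCard.1 hS).2, Nat.add_comm]
  have e1 : ∀ l ∈ Finset.Icc 1 n, (1 / (l : ℝ)) *
      (∑ S ∈ (Finset.Icc 2 n).powersetCard (l - 1),
        (∏ i ∈ S, x i) * ∏ i ∈ Finset.Icc 2 n \ S, (1 - x i))
      = (fun k : ℕ => 1 / (((k - 1 : ℕ) : ℝ) + 1)) l *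
      ∑ S ∈ (Finset.Icc 2 n).powersetCard (l - 1),
        (∏ i ∈ S, x i) * ∏ i ∈ Finset.Icc 2 n \ S, (1 - x i) := by
    intro l hl
    have h1 : 1 ≤ l := (Finset.mem_Icc.1 hl).1
    have hc : ((l - 1 : ℕ) : ℝ) + 1 = (l : ℝ) := by
      rw [Nat.cast_sub h1]; push_cast; ring
    simp only [hc]
  have e2 : ∀ l ∈ Finset.Icc 1 n, ((-1 : ℝ) ^ (l - 1) / (l : ℝ)) *
      (∑ S ∈ (Finset.Icc 2 n).powersetCard (l - 1), ∏ i ∈ S, x i)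
      = (fun k : ℕ => (-1 : ℝ) ^ (k - 1) / (((k - 1 : ℕ) : ℝ) + 1)) l *
      ∑ S ∈ (Finset.Icc 2 n).powersetCard (l - 1), ∏ i ∈ S, x i := by
    intro l hl
    have h1 : 1 ≤ l := (Finset.mem_Icc.1 hl).1
    have hc : ((l - 1 : ℕ) : ℝ) + 1 = (l : ℝ) := by
      rw [Nat.cast_sub h1]; push_cast; ring
    simp only [hc]
  rw [Finset.sum_congr rfl e1, Finset.sum_congr rfl e2, reindex, reindex]
  simpa using key (Finset.Icc 2 n) x
end

section
/- For every integer n ≥ 1 and all real numbers p_1, …, p_n: Σ_{d=1}^{n} p_d · [ Σ_{ℓ=1}^{n} ((−1)^{ℓ−1}/ℓ) · Σ_{S ⊆ [n]∖{d}, |S| = ℓ−1} ∏_{k ∈ S} p_k ] = 1 − ∏_{k=1}^{n} (1 − p_k). -/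
open Finset

lemma aux_insert (s : Finset ℕ) (p : ℕ → ℝ) (d : ℕ) (hd : d ∈ s) (l : ℕ) (hl : 1 ≤ l) :
    p d * ∑ S ∈ (s.erase d).powersetCard (l - 1), ∏ k ∈ S, p k
    = ∑ T ∈ s.powersetCard l, if d ∈ T then ∏ k ∈ T, p k else 0 := by
  rw [← Finset.sum_filter, Finset.mul_sum]
  refine Finset.sum_nbij' (fun S => insert d S) (fun T => T.erase d) ?_ ?_ ?_ ?_ ?_
  · intro S hS
    simp only [Finset.mem_powersetCard, Finset.mem_filter] at hS ⊢
    obtain ⟨hsub, hcard⟩ := hS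
    have hdS : d ∉ S := fun h => (Finset.mem_erase.mp (hsub h)).1 rfl
    refine ⟨⟨fun x hx => ?_, ?_⟩, Finset.mem_insert_self d S⟩
    · rcases Finset.mem_insert.mp hx with h | h
      · exact h ▸ hd
      · exact (Finset.mem_erase.mp (hsub h)).2
    · rw [Finset.card_insert_of_notMem hdS, hcard]
      omega
  · intro T hT
    simp only [Finset.mem_powersetCard, Finset.mem_filter] at hT ⊢
    obtain ⟨⟨hsub, hcard⟩, hdT⟩ := hT
    refine ⟨Finset.erase_subset_erase d hsub, ?_⟩
    rw [Finset.card_erase_of_mem hdT, hcard]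
  · intro S hS
    simp only [Finset.mem_powersetCard] at hS
    have hdS : d ∉ S := fun h => (Finset.mem_erase.mp (hS.1 h)).1 rfl
    simpa using Finset.erase_insert hdS
  · intro T hT
    simp only [Finset.mem_powersetCard, Finset.mem_filter] at hT
    simpa using Finset.insert_erase hT.2
  · intro S hS
    simp only [Finset.mem_powersetCard] at hS
    have hdS : d ∉ S := fun h => (Finset.mem_erase.mp (hS.1 h)).1 rfl
    rw [Finset.prod_insert hdS]

lemma aux_count (s : Finset ℕ) (p : ℕ → ℝ) (l : ℕ) (hl : 1 ≤ l) :
    ∑ d ∈ s, p d * ∑ S ∈ (s.erase d).powersetCard (l - 1), ∏ k ∈ S, p k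
    = (l : ℝ) * ∑ T ∈ s.powersetCard l, ∏ k ∈ T, p k := by
  calc ∑ d ∈ s, p d * ∑ S ∈ (s.erase d).powersetCard (l - 1), ∏ k ∈ S, p k
      = ∑ d ∈ s, ∑ T ∈ s.powersetCard l, if d ∈ T then ∏ k ∈ T, p k else 0 := by
        exact Finset.sum_congr rfl fun d hd => aux_insert s p d hd l hl
    _ = ∑ T ∈ s.powersetCard l, ∑ d ∈ s, if d ∈ T then ∏ k ∈ T, p k else 0 :=
        Finset.sum_comm
    _ = (l : ℝ) * ∑ T ∈ s.powersetCard l, ∏ k ∈ T, p k := by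
        rw [Finset.mul_sum]
        refine Finset.sum_congr rfl fun T hT => ?_
        simp only [Finset.mem_powersetCard] at hT
        rw [Finset.sum_ite_mem, Finset.inter_eq_right.mpr hT.1, Finset.sum_const,
          hT.2, nsmul_eq_mul]

lemma aux_prod (s : Finset ℕ) (p : ℕ → ℝ) :
    ∏ k ∈ s, (1 - p k) = ∑ T ∈ s.powerset, (-1 : ℝ) ^ T.card * ∏ k ∈ T, p k := by
  have : ∀ k ∈ s, (1 - p k) = (-p k) + 1 := fun k _ => by ring
  rw [Finset.prod_congr rfl this, Finset.prod_add]
  refine Finset.sum_congr rfl fun T hT => ?_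
  rw [Finset.prod_const_one, mul_one,
    show (fun i => -p i) = (fun i => (-1 : ℝ) * p i) from funext fun i => by ring,
    Finset.prod_mul_distrib, Finset.prod_const]

/-- for every integer `n ≥ 1` and reals `p_1, …, p_n`,
`Σ_{d=1}^{n} p_d ⬝ [Σ_{ℓ=1}^{n} ((−1)^{ℓ−1}/ℓ) Σ_{S ⊆ [n]∖{d}, |S|=ℓ−1} ∏_{k∈S} p_k]
 = 1 − ∏_{k=1}^{n} (1 − p_k)`. -/
theorem hit_probability_identity (n : ℕ) (hn : 1 ≤ n) (p : ℕ → ℝ) :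
    ∑ d ∈ Finset.Icc 1 n, p d *
        ∑ l ∈ Finset.Icc 1 n, ((-1 : ℝ) ^ (l - 1) / (l : ℝ)) *
          ∑ S ∈ ((Finset.Icc 1 n).erase d).powersetCard (l - 1), ∏ k ∈ S, p k
    = 1 - ∏ k ∈ Finset.Icc 1 n, (1 - p k) := by
  set s := Finset.Icc 1 n with hs
  have lhs_eq : ∑ d ∈ s, p d *
        ∑ l ∈ s, ((-1 : ℝ) ^ (l - 1) / (l : ℝ)) *
          ∑ S ∈ (s.erase d).powersetCard (l - 1), ∏ k ∈ S, p k
      = ∑ l ∈ s, (-1 : ℝ) ^ (l - 1) * ∑ T ∈ s.powersetCard l, ∏ k ∈ T, p k := by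
    calc ∑ d ∈ s, p d * ∑ l ∈ s, ((-1 : ℝ) ^ (l - 1) / (l : ℝ)) *
          ∑ S ∈ (s.erase d).powersetCard (l - 1), ∏ k ∈ S, p k
        = ∑ d ∈ s, ∑ l ∈ s, ((-1 : ℝ) ^ (l - 1) / (l : ℝ)) *
            (p d * ∑ S ∈ (s.erase d).powersetCard (l - 1), ∏ k ∈ S, p k) := by
          refine Finset.sum_congr rfl fun d hd => ?_
          rw [Finset.mul_sum]
          exact Finset.sum_congr rfl fun l hl => by ring
      _ = ∑ l ∈ s, ((-1 : ℝ) ^ (l - 1) / (l : ℝ)) *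
            ∑ d ∈ s, (p d * ∑ S ∈ (s.erase d).powersetCard (l - 1), ∏ k ∈ S, p k) := by
          rw [Finset.sum_comm]
          exact Finset.sum_congr rfl fun l hl => (Finset.mul_sum _ _ _).symm
      _ = ∑ l ∈ s, (-1 : ℝ) ^ (l - 1) * ∑ T ∈ s.powersetCard l, ∏ k ∈ T, p k := by
          refine Finset.sum_congr rfl fun l hl => ?_
          have hl1 : 1 ≤ l := (Finset.mem_Icc.mp hl).1
          rw [aux_count s p l hl1]
          have hlne : (l : ℝ) ≠ 0 := Nat.cast_ne_zero.mpr (by omega)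
          field_simp
  rw [lhs_eq, aux_prod]
  rw [Finset.sum_powerset]
  have hcard : s.card = n := by rw [hs, Nat.card_Icc]; omega
  rw [hcard]
  rw [show Finset.range (n+1) = insert 0 (Finset.Icc 1 n) from by ext x; simp; omega,
    Finset.sum_insert (by simp)]
  simp only [Finset.powersetCard_zero, Finset.sum_singleton, Finset.card_empty, pow_zero,
    Finset.prod_empty, mul_one]
  have hcongr : ∀ j ∈ Finset.Icc 1 n,
      ∑ t ∈ Finset.powersetCard j s, (-1:ℝ)^t.card * ∏ k ∈ t, p k
      = (-1:ℝ)^j * ∑ t ∈ s.powersetCard j, ∏ k ∈ t, p k := by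
    intro j hj
    rw [Finset.mul_sum]
    exact Finset.sum_congr rfl fun t ht => by rw [(Finset.mem_powersetCard.mp ht).2]
  rw [Finset.sum_congr rfl hcongr]
  rw [show (1 : ℝ) - (1 + ∑ j ∈ Finset.Icc 1 n, (-1:ℝ)^j * ∑ t ∈ s.powersetCard j, ∏ k ∈ t, p k)
      = ∑ j ∈ Finset.Icc 1 n, -((-1:ℝ)^j * ∑ t ∈ s.powersetCard j, ∏ k ∈ t, p k) from by
    rw [Finset.sum_neg_distrib]; ring]
  refine Finset.sum_congr rfl fun j hj => ?_
  have hj1 : 1 ≤ j := (Finset.mem_Icc.mp hj).1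
  have hpow : (-1 : ℝ) ^ j = -(-1 : ℝ) ^ (j - 1) := by
    conv_lhs => rw [show j = (j - 1) + 1 from by omega]
    rw [pow_succ]; ring
  rw [hpow]; ring
end

section
/- Let G = ⟨V,E⟩ be a finite simple graph with no isolated vertices and δ ≥ 1. For each j ∈ [δ] let σ_j : E → ℝ satisfy σ_j(e) ≥ 0 for all e and Σ_{e∈E} σ_j(e) = 1, and for a vertex v set P_j(v) = Σ_{e ∈ E, v ∈ e} σ_j(e) and Hit(v) = 1 − ∏_{j∈[δ]} (1 − P_j(v)). Then Σ_{v∈V} Hit(v) ≤ 2δ; moreover, if for every vertex v at most one index j satisfies P_j(v) > 0 (the unidefender case), then Σ_{v∈V} Hit(v) = 2δ, and if some vertex v has at least two indices j with P_j(v) > 0 (the multidefender case), then Σ_{v∈V} Hit(v) < 2δ. -/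
open Finset
open scoped Classical

variable {V : Type*} [Fintype V] [DecidableEq V]

/-- The sum of `f` over the edges (elements of `Sym2 V`) containing the vertex `v`. -/
noncomputable def fracDeg (f : Sym2 V → ℝ) (v : V) : ℝ :=
  ∑ e ∈ Finset.univ.filter (fun e : Sym2 V => v ∈ e), f e

/-- Weierstrass product inequality. -/
lemma weier {ι : Type*} (s : Finset ι) (x : ι → ℝ) (h0 : ∀ i ∈ s, 0 ≤ x i)
    (h1 : ∀ i ∈ s, x i ≤ 1) : 1 - ∑ i ∈ s, x i ≤ ∏ i ∈ s, (1 - x i) := by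
  induction s using Finset.induction_on with
  | empty => simp
  | insert a t hm ih =>
    rw [Finset.sum_insert hm, Finset.prod_insert hm]
    have hxa0 := h0 a (Finset.mem_insert_self a t)
    have hxa1 := h1 a (Finset.mem_insert_self a t)
    have iht : 1 - ∑ i ∈ t, x i ≤ ∏ i ∈ t, (1 - x i) :=
      ih (fun i hi => h0 i (Finset.mem_insert_of_mem hi))
        (fun i hi => h1 i (Finset.mem_insert_of_mem hi))
    have hsum0 : ∑ i ∈ t, (0:ℝ) ≤ ∑ i ∈ t, x i :=
      Finset.sum_le_sum (fun i hi => h0 i (Finset.mem_insert_of_mem hi))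
    simp only [Finset.sum_const_zero] at hsum0
    nlinarith [mul_nonneg hxa0 hsum0]

lemma prod_nonneg_one_sub {ι : Type*} (s : Finset ι) (x : ι → ℝ)
    (h1 : ∀ i ∈ s, x i ≤ 1) : 0 ≤ ∏ i ∈ s, (1 - x i) :=
  Finset.prod_nonneg fun i hi => by linarith [h1 i hi]

/-- Strict Weierstrass inequality with two positive entries. -/
lemma weier_strict {ι : Type*} [DecidableEq ι] (s : Finset ι) (x : ι → ℝ)
    (h0 : ∀ i ∈ s, 0 ≤ x i) (h1 : ∀ i ∈ s, x i ≤ 1)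
    {j k : ι} (hj : j ∈ s) (hk : k ∈ s) (hjk : j ≠ k)
    (hxj : 0 < x j) (hxk : 0 < x k) :
    1 - ∑ i ∈ s, x i < ∏ i ∈ s, (1 - x i) := by
  have hks : k ∈ s.erase j := Finset.mem_erase.2 ⟨fun h => hjk h.symm, hk⟩
  have hsub : (s.erase j).erase k ⊆ s := fun i hi =>
    Finset.mem_of_mem_erase (Finset.mem_of_mem_erase hi)
  have hprod : ∏ i ∈ s, (1 - x i)
      = (1 - x j) * ((1 - x k) * ∏ i ∈ (s.erase j).erase k, (1 - x i)) := by
    rw [Finset.mul_prod_erase (s.erase j) (fun i => 1 - x i) hks,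
      Finset.mul_prod_erase s (fun i => 1 - x i) hj]
  have hsum : ∑ i ∈ s, x i = x j + (x k + ∑ i ∈ (s.erase j).erase k, x i) := by
    rw [Finset.add_sum_erase (s.erase j) x hks, Finset.add_sum_erase s x hj]
  set t := (s.erase j).erase k with ht
  have hS0 : (0:ℝ) ≤ ∑ i ∈ t, x i :=
    Finset.sum_nonneg fun i hi => h0 i (hsub hi)
  have hP0 : 0 ≤ ∏ i ∈ t, (1 - x i) :=
    prod_nonneg_one_sub t x fun i hi => h1 i (hsub hi)
  have hW : 1 - ∑ i ∈ t, x i ≤ ∏ i ∈ t, (1 - x i) :=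
    weier t x (fun i hi => h0 i (hsub hi)) (fun i hi => h1 i (hsub hi))
  have hxj1 := h1 j hj
  have hxk1 := h1 k hk
  rw [hprod, hsum]
  set S := ∑ i ∈ t, x i
  set P := ∏ i ∈ t, (1 - x i)
  rcases lt_or_ge (1 - (x j + (x k + S))) 0 with h | h
  · calc 1 - (x j + (x k + S)) < 0 := h
      _ ≤ (1 - x j) * ((1 - x k) * P) :=
        mul_nonneg (by linarith) (mul_nonneg (by linarith) hP0)
  · have hj1 : x j < 1 := by nlinarith
    have hk1 : x k < 1 := by nlinarith
    have hS1 : S < 1 := by nlinarith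
    nlinarith [mul_pos (sub_pos.2 hj1) (sub_pos.2 hk1),
      mul_pos hxj hxk, mul_nonneg (mul_nonneg hxj.le hxk.le) hS0,
      mul_le_mul_of_nonneg_left hW (mul_nonneg (by linarith : (0:ℝ) ≤ 1 - x j) (by linarith : (0:ℝ) ≤ 1 - x k))]

lemma card_mem_sym2 (e : Sym2 V) (h : ¬ e.IsDiag) :
    (Finset.univ.filter (fun v : V => v ∈ e)).card = 2 := by
  induction e using Sym2.ind with
  | _ a b =>
    rw [Sym2.mk_isDiag_iff] at h
    have : Finset.univ.filter (fun v : V => v ∈ s(a, b)) = {a, b} := by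
      ext v; simp [Sym2.mem_iff]
    rw [this, Finset.card_insert_of_notMem (by simpa using h), Finset.card_singleton]

/-- for `δ` independent probability distributions `σ_j` on the edge set of
`G`, with `P_j(v) = fracDeg (σ j) v` and `Hit(v) = 1 − ∏_j (1 − P_j(v))`:
`Σ_v Hit(v) ≤ 2δ`, with equality in the unidefender case (each vertex has at most one
`j` with `P_j(v) > 0`), and strict inequality in the multidefender case (some vertex
has at least two such `j`). -/
theorem sum_hit_probabilities (G : SimpleGraph V) (hG : ∀ v : V, ∃ u, G.Adj u v)
    (δ : ℕ) (hδ : 1 ≤ δ) (σ : Fin δ → Sym2 V → ℝ)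
    (hpos : ∀ j e, 0 ≤ σ j e)
    (hedge : ∀ j e, e ∉ G.edgeSet → σ j e = 0)
    (hsum : ∀ j, ∑ e : Sym2 V, σ j e = 1) :
    (∑ v : V, (1 - ∏ j, (1 - fracDeg (σ j) v)) ≤ 2 * (δ : ℝ)) ∧
    ((∀ v : V, (Finset.univ.filter (fun j => 0 < fracDeg (σ j) v)).card ≤ 1) →
      ∑ v : V, (1 - ∏ j, (1 - fracDeg (σ j) v)) = 2 * (δ : ℝ)) ∧
    ((∃ v : V, 2 ≤ (Finset.univ.filter (fun j => 0 < fracDeg (σ j) v)).card) →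
      ∑ v : V, (1 - ∏ j, (1 - fracDeg (σ j) v)) < 2 * (δ : ℝ)) := by
  have hP0 : ∀ j v, 0 ≤ fracDeg (σ j) v := fun j v =>
    Finset.sum_nonneg fun e _ => hpos j e
  have hP1 : ∀ j v, fracDeg (σ j) v ≤ 1 := by
    intro j v
    rw [← hsum j]
    exact Finset.sum_le_sum_of_subset_of_nonneg (Finset.filter_subset _ _)
      (fun e _ _ => hpos j e)
  -- sum over vertices of P_j equals 2
  have hsumP : ∀ j, ∑ v : V, fracDeg (σ j) v = 2 := by
    intro j
    unfold fracDeg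
    have : ∑ v : V, ∑ e ∈ Finset.univ.filter (fun e : Sym2 V => v ∈ e), σ j e
        = ∑ e : Sym2 V, ((Finset.univ.filter (fun v : V => v ∈ e)).card : ℝ) * σ j e := by
      simp_rw [Finset.sum_filter]
      rw [Finset.sum_comm]
      congr 1
      ext e
      rw [← Finset.sum_filter, Finset.sum_const, nsmul_eq_mul]
    rw [this]
    have : ∀ e : Sym2 V, ((Finset.univ.filter (fun v : V => v ∈ e)).card : ℝ) * σ j e
        = 2 * σ j e := by
      intro e
      by_cases he : σ j e = 0
      · simp [he]
      · have heE : e ∈ G.edgeSet := by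
          by_contra h; exact he (hedge j e h)
        have : ¬ e.IsDiag := SimpleGraph.not_isDiag_of_mem_edgeSet G heE
        rw [card_mem_sym2 e this]; norm_num
    rw [Finset.sum_congr rfl fun e _ => this e, ← Finset.mul_sum, hsum j, mul_one]
  have hHit_le : ∀ v : V, 1 - ∏ j, (1 - fracDeg (σ j) v) ≤ ∑ j, fracDeg (σ j) v := by
    intro v
    have := weier Finset.univ (fun j => fracDeg (σ j) v)
      (fun j _ => hP0 j v) (fun j _ => hP1 j v)
    linarith
  have htotal : ∑ v : V, ∑ j, fracDeg (σ j) v = 2 * (δ : ℝ) := by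
    rw [Finset.sum_comm]
    simp_rw [hsumP]
    simp [mul_comm]
  refine ⟨?_, ?_, ?_⟩
  · calc ∑ v : V, (1 - ∏ j, (1 - fracDeg (σ j) v))
        ≤ ∑ v : V, ∑ j, fracDeg (σ j) v := Finset.sum_le_sum fun v _ => hHit_le v
      _ = 2 * (δ : ℝ) := htotal
  · intro huni
    have : Nonempty (Fin δ) := ⟨⟨0, hδ⟩⟩
    rw [← htotal]
    refine Finset.sum_congr rfl fun v _ => ?_
    rcases Finset.card_le_one_iff_subset_singleton.1 (huni v) with ⟨a, ha⟩
    have hzero : ∀ j, j ≠ a → fracDeg (σ j) v = 0 := by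
      intro j hja
      by_contra h
      have : j ∈ Finset.univ.filter (fun j => 0 < fracDeg (σ j) v) := by
        simp [lt_of_le_of_ne (hP0 j v) (Ne.symm h)]
      exact hja (Finset.mem_singleton.1 (ha this))
    have hprod : ∏ j, (1 - fracDeg (σ j) v) = 1 - fracDeg (σ a) v :=
      Finset.prod_eq_single a (fun j _ hja => by rw [hzero j hja, sub_zero])
        (fun h => absurd (Finset.mem_univ a) h)
    have hsum' : ∑ j, fracDeg (σ j) v = fracDeg (σ a) v :=
      Finset.sum_eq_single a (fun j _ hja => hzero j hja)
        (fun h => absurd (Finset.mem_univ a) h)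
    rw [hprod, hsum']
    ring
  · rintro ⟨v0, hv0⟩
    rw [← htotal]
    refine Finset.sum_lt_sum (fun v _ => hHit_le v) ⟨v0, Finset.mem_univ v0, ?_⟩
    obtain ⟨j, hj, k, hk, hjk⟩ := Finset.one_lt_card.1 hv0
    simp only [Finset.mem_filter] at hj hk
    have := weier_strict Finset.univ (fun j => fracDeg (σ j) v0)
      (fun j _ => hP0 j v0) (fun j _ => hP1 j v0)
      (Finset.mem_univ j) (Finset.mem_univ k) hjk hj.2 hk.2
    linarith
end

section
/- In every Nash equilibrium σ of AD_{α,δ}(G), the union Supports_σ(D) of the defenders' supports is an edge cover of G, i.e., every vertex of V belongs to some edge in Supports_σ(D). -/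
open Finset
open scoped Classical

variable {V : Type*} [Fintype V] [DecidableEq V]

/-- A mixed profile of the game `AD_{α,δ}(G)`: each of the `α` attackers has a
probability distribution on the vertices, and each of the `δ` defenders has a
probability distribution on the edges of `G`. -/
structure MixedProfile (G : SimpleGraph V) (α δ : ℕ) where
  atk : Fin α → V → ℝ
  dfn : Fin δ → Sym2 V → ℝ
  atk_nonneg : ∀ i v, 0 ≤ atk i v
  atk_sum : ∀ i, ∑ v : V, atk i v = 1
  dfn_nonneg : ∀ j e, 0 ≤ dfn j e
  dfn_edge : ∀ j e, e ∉ G.edgeSet → dfn j e = 0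
  dfn_sum : ∀ j, ∑ e : Sym2 V, dfn j e = 1

namespace MixedProfile

variable {G : SimpleGraph V} {α δ : ℕ}

/-- A pure configuration: a vertex for each attacker, an edge for each defender. -/
abbrev Config (V : Type*) (α δ : ℕ) := (Fin α → V) × (Fin δ → Sym2 V)

/-- The probability of a pure configuration under the (independent) mixed profile. -/
noncomputable def configProb (σ : MixedProfile G α δ) (c : Config V α δ) : ℝ :=
  (∏ i, σ.atk i (c.1 i)) * ∏ j, σ.dfn j (c.2 j)

/-- The number of attackers choosing vertex `w` in configuration `c`. -/
noncomputable def atkCount (c : Config V α δ) (w : V) : ℕ :=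
  (Finset.univ.filter (fun i : Fin α => c.1 i = w)).card

/-- The number of defenders choosing an edge containing `w` in configuration `c`. -/
noncomputable def dfnCount (c : Config V α δ) (w : V) : ℕ :=
  (Finset.univ.filter (fun j : Fin δ => w ∈ c.2 j)).card

/-- The utility of defender `d` at a pure configuration: the fair share
`|A_s(u)|/|D_s(u)| + |A_s(v)|/|D_s(v)|` for its chosen edge `(u,v)`. -/
noncomputable def defUtilPure (c : Config V α δ) (d : Fin δ) : ℝ :=
  ∑ w ∈ Finset.univ.filter (fun w : V => w ∈ c.2 d),
    (atkCount c w : ℝ) / (dfnCount c w : ℝ)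

/-- The utility of attacker `a` at a pure configuration: `0` if caught, `1` otherwise. -/
noncomputable def atkUtilPure (c : Config V α δ) (a : Fin α) : ℝ :=
  if ∃ j, c.1 a ∈ c.2 j then 0 else 1

/-- Expected utility of defender `d`. -/
noncomputable def expDefUtil (σ : MixedProfile G α δ) (d : Fin δ) : ℝ :=
  ∑ c : Config V α δ, σ.configProb c * defUtilPure c d

/-- Expected utility of attacker `a`. -/
noncomputable def expAtkUtil (σ : MixedProfile G α δ) (a : Fin α) : ℝ :=
  ∑ c : Config V α δ, σ.configProb c * atkUtilPure c a

/-- `σ` is a Nash equilibrium: no player can strictly increase her expected utility by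
unilaterally changing her mixed strategy. -/
def IsNash (σ : MixedProfile G α δ) : Prop :=
  (∀ (τ : MixedProfile G α δ) (a : Fin α),
      (∀ i, i ≠ a → τ.atk i = σ.atk i) → τ.dfn = σ.dfn →
      τ.expAtkUtil a ≤ σ.expAtkUtil a) ∧
  (∀ (τ : MixedProfile G α δ) (d : Fin δ),
      τ.atk = σ.atk → (∀ j, j ≠ d → τ.dfn j = σ.dfn j) →
      τ.expDefUtil d ≤ σ.expDefUtil d)

/-- The union of the supports of the defenders. -/
noncomputable def dfnSupports (σ : MixedProfile G α δ) : Finset (Sym2 V) :=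
  Finset.univ.filter (fun e => ∃ j, 0 < σ.dfn j e)

/-- The union of the supports of the attackers. -/
noncomputable def atkSupports (σ : MixedProfile G α δ) : Finset V :=
  Finset.univ.filter (fun v => ∃ i, 0 < σ.atk i v)

/-- The probability that some defender chooses an edge containing `v`. -/
noncomputable def hitProb (σ : MixedProfile G α δ) (v : V) : ℝ :=
  1 - ∏ j, (1 - fracDeg (σ.dfn j) v)

/-- The minimum hitting probability of the profile. -/
noncomputable def minHit [Nonempty V] (σ : MixedProfile G α δ) : ℝ :=
  Finset.univ.inf' Finset.univ_nonempty σ.hitProb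

/-- The Defense-Ratio of a profile. -/
noncomputable def defenseRatio (σ : MixedProfile G α δ) : ℝ :=
  (α : ℝ) / ∑ d, σ.expDefUtil d

end MixedProfile

/-- `F` is an edge cover of `G`. -/
def IsEdgeCover (G : SimpleGraph V) (F : Finset (Sym2 V)) : Prop :=
  (↑F ⊆ G.edgeSet) ∧ ∀ v : V, ∃ e ∈ F, v ∈ e

/-- `β'(G)`: the minimum size of an edge cover of `G`. -/
noncomputable def edgeCoverNumber (G : SimpleGraph V) : ℕ :=
  sInf {n : ℕ | ∃ F : Finset (Sym2 V), IsEdgeCover G F ∧ F.card = n}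

open MixedProfile

section Aux

variable {G : SimpleGraph V} {α δ : ℕ}

lemma exists_pos_of_sum_one {ι : Type*} [Fintype ι] (p : ι → ℝ)
    (h0 : ∀ x, 0 ≤ p x) (h1 : ∑ x, p x = 1) : ∃ x, 0 < p x := by
  by_contra h
  push_neg at h
  have : ∑ x, p x ≤ 0 := Finset.sum_nonpos (fun x _ => h x)
  linarith

lemma configProb_nonneg (σ : MixedProfile G α δ) (c : Config V α δ) :
    0 ≤ σ.configProb c :=
  mul_nonneg (Finset.prod_nonneg fun i _ => σ.atk_nonneg i _)
    (Finset.prod_nonneg fun j _ => σ.dfn_nonneg j _)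

lemma sum_configProb (σ : MixedProfile G α δ) :
    ∑ c : Config V α δ, σ.configProb c = 1 := by
  have h1 : ∑ c : Config V α δ, σ.configProb c =
      (∑ f : Fin α → V, ∏ i, σ.atk i (f i)) *
      (∑ g : Fin δ → Sym2 V, ∏ j, σ.dfn j (g j)) := by
    unfold MixedProfile.configProb
    rw [Fintype.sum_prod_type]
    dsimp only
    rw [← Finset.sum_mul_sum]
  have h2 : ∑ f : Fin α → V, ∏ i, σ.atk i (f i) = 1 := by
    rw [show (∑ f : Fin α → V, ∏ i, σ.atk i (f i)) = ∏ i, ∑ x, σ.atk i x by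
      rw [Finset.prod_univ_sum]; simp]
    simp [σ.atk_sum]
  have h3 : ∑ g : Fin δ → Sym2 V, ∏ j, σ.dfn j (g j) = 1 := by
    rw [show (∑ g : Fin δ → Sym2 V, ∏ j, σ.dfn j (g j)) = ∏ j, ∑ e, σ.dfn j e by
      rw [Finset.prod_univ_sum]; simp]
    simp [σ.dfn_sum]
  rw [h1, h2, h3, mul_one]

lemma defUtilPure_nonneg (c : Config V α δ) (d : Fin δ) :
    0 ≤ defUtilPure c d :=
  Finset.sum_nonneg fun w _ => div_nonneg (Nat.cast_nonneg _) (Nat.cast_nonneg _)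

end Aux


/-- in every Nash equilibrium of `AD_{α,δ}(G)`, the union of the
defenders' supports is an edge cover of `G`. -/
theorem nash_defender_supports_edge_cover (G : SimpleGraph V)
    (hG : ∀ v : V, ∃ u, G.Adj u v) (α δ : ℕ) (hα : 1 ≤ α) (hδ : 1 ≤ δ)
    (σ : MixedProfile G α δ) (hσ : σ.IsNash) :
    ∀ v : V, ∃ e ∈ σ.dfnSupports, v ∈ e := by
  intro v
  by_contra hcon
  push_neg at hcon
  -- `v` is covered by no defender's support
  have hv : ∀ (e : Sym2 V), v ∈ e → ∀ j, σ.dfn j e = 0 := by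
    intro e hve j
    by_contra h0
    have hpos : 0 < σ.dfn j e := lt_of_le_of_ne (σ.dfn_nonneg j e) (Ne.symm h0)
    exact absurd hve (hcon e (by simp [MixedProfile.dfnSupports, Finset.mem_filter]; exact ⟨j, hpos⟩))
  -- Every attacker escapes almost surely
  have key : ∀ (i : Fin α) (c : Config V α δ), σ.configProb c ≠ 0 → atkUtilPure c i = 1 := by
    intro a
    -- deviation: attacker `a` plays `v` with probability 1
    set τ : MixedProfile G α δ :=
      { atk := Function.update σ.atk a (fun w => if w = v then 1 else 0)
        dfn := σ.dfn
        atk_nonneg := by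
          intro i w
          rcases eq_or_ne i a with rfl | hi
          · simp only [Function.update_self]; positivity
          · simp [Function.update_of_ne hi, σ.atk_nonneg]
        atk_sum := by
          intro i
          rcases eq_or_ne i a with rfl | hi
          · simp
          · simp [Function.update_of_ne hi, σ.atk_sum]
        dfn_nonneg := σ.dfn_nonneg
        dfn_edge := σ.dfn_edge
        dfn_sum := σ.dfn_sum } with hτ
    have hle : τ.expAtkUtil a ≤ σ.expAtkUtil a := by
      refine hσ.1 τ a (fun i hi => ?_) rfl
      simp [hτ, Function.update_of_ne hi]
    have hτ1 : τ.expAtkUtil a = 1 := by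
      have : τ.expAtkUtil a = ∑ c : Config V α δ, τ.configProb c := by
        unfold MixedProfile.expAtkUtil
        refine Finset.sum_congr rfl fun c _ => ?_
        rcases eq_or_ne (τ.configProb c) 0 with h0 | h0
        · rw [h0, zero_mul]
        · have hfac : ∀ i : Fin α, τ.atk i (c.1 i) ≠ 0 := by
            intro i
            intro hz
            apply h0
            unfold MixedProfile.configProb
            rw [Finset.prod_eq_zero (Finset.mem_univ i) hz, zero_mul]
          have hfacd : ∀ j : Fin δ, τ.dfn j (c.2 j) ≠ 0 := by
            intro j hz
            apply h0
            unfold MixedProfile.configProb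
            rw [Finset.prod_eq_zero (Finset.mem_univ j) hz, mul_zero]
          have hca : c.1 a = v := by
            have := hfac a
            simp only [hτ, Function.update_self] at this
            by_contra hne
            simp [hne] at this
          have hnot : ¬ ∃ j, c.1 a ∈ c.2 j := by
            rintro ⟨j, hj⟩
            rw [hca] at hj
            exact hfacd j (hv (c.2 j) hj j)
          rw [MixedProfile.atkUtilPure, if_neg hnot, mul_one]
      rw [this, sum_configProb]
    -- from the Nash inequality, `σ.expAtkUtil a = 1`, hence all pos-prob configs escape
    have hub : σ.expAtkUtil a ≤ 1 := by
      rw [← sum_configProb σ]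
      unfold MixedProfile.expAtkUtil
      refine Finset.sum_le_sum fun c _ => ?_
      have h1 : atkUtilPure c a ≤ 1 := by
        unfold MixedProfile.atkUtilPure; split <;> norm_num
      calc σ.configProb c * atkUtilPure c a ≤ σ.configProb c * 1 :=
            mul_le_mul_of_nonneg_left h1 (configProb_nonneg σ c)
        _ = σ.configProb c := mul_one _
    have heq : σ.expAtkUtil a = 1 := le_antisymm hub (hτ1 ▸ hle)
    have hzero : ∑ c : Config V α δ, σ.configProb c * (1 - atkUtilPure c a) = 0 := by
      have : ∑ c : Config V α δ, σ.configProb c * (1 - atkUtilPure c a)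
          = (∑ c : Config V α δ, σ.configProb c) - σ.expAtkUtil a := by
        unfold MixedProfile.expAtkUtil
        rw [← Finset.sum_sub_distrib]
        refine Finset.sum_congr rfl fun c _ => by ring
      rw [this, sum_configProb, heq, sub_self]
    intro c hc
    have hnn : ∀ c ∈ (Finset.univ : Finset (Config V α δ)),
        0 ≤ σ.configProb c * (1 - atkUtilPure c a) := by
      intro c _
      have h1 : atkUtilPure c a ≤ 1 := by
        unfold MixedProfile.atkUtilPure; split <;> norm_num
      exact mul_nonneg (configProb_nonneg σ c) (by linarith)
    have := (Finset.sum_eq_zero_iff_of_nonneg hnn).mp hzero c (Finset.mem_univ c)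
    rcases mul_eq_zero.mp this with h | h
    · exact absurd h hc
    · linarith
  -- Hence every defender gets expected utility 0
  have hdef0 : ∀ d : Fin δ, σ.expDefUtil d = 0 := by
    intro d
    unfold MixedProfile.expDefUtil
    refine Finset.sum_eq_zero fun c _ => ?_
    rcases eq_or_ne (σ.configProb c) 0 with h0 | h0
    · rw [h0, zero_mul]
    · have : defUtilPure c d = 0 := by
        unfold MixedProfile.defUtilPure
        refine Finset.sum_eq_zero fun w hw => ?_
        have hwe : w ∈ c.2 d := (Finset.mem_filter.mp hw).2
        rcases Nat.eq_zero_or_pos (atkCount c w) with hz | hp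
        · rw [hz]; simp
        · exfalso
          have : (Finset.univ.filter (fun i : Fin α => c.1 i = w)).Nonempty :=
            Finset.card_pos.mp hp
          obtain ⟨i, hi⟩ := this
          have hiw : c.1 i = w := (Finset.mem_filter.mp hi).2
          have : atkUtilPure c i = 0 := by
            rw [MixedProfile.atkUtilPure, if_pos ⟨d, hiw ▸ hwe⟩]
          rw [key i c h0] at this
          norm_num at this
      rw [this, mul_zero]
  -- Defender deviation: cover a vertex in some attacker's support
  have a0 : Fin α := ⟨0, hα⟩
  have d0 : Fin δ := ⟨0, hδ⟩
  obtain ⟨u, hu⟩ := exists_pos_of_sum_one (σ.atk a0) (σ.atk_nonneg a0) (σ.atk_sum a0)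
  obtain ⟨u', hu'⟩ := hG u
  set e0 : Sym2 V := s(u', u) with he0
  have he0G : e0 ∈ G.edgeSet := hu'
  set τ : MixedProfile G α δ :=
    { atk := σ.atk
      dfn := Function.update σ.dfn d0 (fun e => if e = e0 then 1 else 0)
      atk_nonneg := σ.atk_nonneg
      atk_sum := σ.atk_sum
      dfn_nonneg := by
        intro j e
        rcases eq_or_ne j d0 with rfl | hj
        · simp only [Function.update_self]; positivity
        · simp [Function.update_of_ne hj, σ.dfn_nonneg]
      dfn_edge := by
        intro j e he
        rcases eq_or_ne j d0 with rfl | hj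
        · simp only [Function.update_self]
          rcases eq_or_ne e e0 with rfl | hne
          · exact absurd he0G he
          · simp [hne]
        · simp [Function.update_of_ne hj, σ.dfn_edge j e he]
      dfn_sum := by
        intro j
        rcases eq_or_ne j d0 with rfl | hj
        · simp
        · simp [Function.update_of_ne hj, σ.dfn_sum] } with hτ
  have hle : τ.expDefUtil d0 ≤ σ.expDefUtil d0 := by
    refine hσ.2 τ d0 rfl fun j hj => ?_
    simp [hτ, Function.update_of_ne hj]
  -- build a configuration with positive probability and positive defender utility
  have hchA : ∀ i : Fin α, ∃ w, 0 < σ.atk i w := fun i =>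
    exists_pos_of_sum_one (σ.atk i) (σ.atk_nonneg i) (σ.atk_sum i)
  have hchD : ∀ j : Fin δ, ∃ e, 0 < σ.dfn j e := fun j =>
    exists_pos_of_sum_one (σ.dfn j) (σ.dfn_nonneg j) (σ.dfn_sum j)
  set c0 : Config V α δ :=
    (fun i => if i = a0 then u else Classical.choose (hchA i),
     fun j => if j = d0 then e0 else Classical.choose (hchD j)) with hc0
  have hc0u : c0.1 a0 = u := by simp [hc0]
  have hc0e : c0.2 d0 = e0 := by simp [hc0]
  have hprob : 0 < τ.configProb c0 := by
    unfold MixedProfile.configProb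
    apply mul_pos
    · refine Finset.prod_pos fun i _ => ?_
      rcases eq_or_ne i a0 with rfl | hi
      · rw [hc0u]; exact hu
      · simp only [hτ, hc0]
        rw [if_neg hi]
        exact Classical.choose_spec (hchA i)
    · refine Finset.prod_pos fun j _ => ?_
      rcases eq_or_ne j d0 with rfl | hj
      · rw [hc0e]
        simp [hτ]
      · simp only [hτ, hc0]
        rw [Function.update_of_ne hj, if_neg hj]
        exact Classical.choose_spec (hchD j)
  have hue0 : u ∈ c0.2 d0 := by rw [hc0e, he0]; exact Sym2.mem_mk_right u' u
  have hutil : 0 < defUtilPure c0 d0 := by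
    unfold MixedProfile.defUtilPure
    refine Finset.sum_pos' (fun w _ => div_nonneg (Nat.cast_nonneg _) (Nat.cast_nonneg _)) ?_
    refine ⟨u, Finset.mem_filter.mpr ⟨Finset.mem_univ u, hue0⟩, ?_⟩
    have hA : 0 < atkCount c0 u := by
      rw [MixedProfile.atkCount]
      refine Finset.card_pos.mpr ⟨a0, Finset.mem_filter.mpr ⟨Finset.mem_univ a0, hc0u⟩⟩
    have hD : 0 < dfnCount c0 u := by
      rw [MixedProfile.dfnCount]
      refine Finset.card_pos.mpr ⟨d0, Finset.mem_filter.mpr ⟨Finset.mem_univ d0, hue0⟩⟩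
    positivity
  have hpos : 0 < τ.expDefUtil d0 := by
    unfold MixedProfile.expDefUtil
    refine Finset.sum_pos' (fun c _ => mul_nonneg (configProb_nonneg τ c) (defUtilPure_nonneg c d0)) ?_
    exact ⟨c0, Finset.mem_univ c0, mul_pos hprob hutil⟩
  rw [hdef0 d0] at hle
  linarith
end

section
/- In every Nash equilibrium σ of AD_{α,δ}(G), the set Supports_σ(A) (the union of the attackers' supports) is a vertex cover of the subgraph of G induced by the edge set Supports_σ(D), i.e., every edge in Supports_σ(D) has at least one endpoint in Supports_σ(A). -/
open Finset
open scoped Classical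

variable {V : Type*} [Fintype V] [DecidableEq V]

open MixedProfile

section Aux

variable {G : SimpleGraph V} {α δ : ℕ}

/-- The "value" for defender `d` of playing edge `e`, everyone else following `σ`. -/
noncomputable def Kfun (σ : MixedProfile G α δ) (d : Fin δ) (e : Sym2 V) : ℝ :=
  ∑ c : Config V α δ, if c.2 d = e then
    (∏ i, σ.atk i (c.1 i)) *
      ((∏ j ∈ Finset.univ.erase d, σ.dfn j (c.2 j)) * defUtilPure c d)
    else 0

lemma expDefUtil_eq_sum (σ τ : MixedProfile G α δ) (d : Fin δ)
    (hatk : τ.atk = σ.atk) (hdfn : ∀ j, j ≠ d → τ.dfn j = σ.dfn j) :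
    τ.expDefUtil d = ∑ e : Sym2 V, τ.dfn d e * Kfun σ d e := by
  calc τ.expDefUtil d
      = ∑ c : Config V α δ, ∑ e : Sym2 V, (if c.2 d = e then
          τ.dfn d e * ((∏ i, σ.atk i (c.1 i)) *
            ((∏ j ∈ Finset.univ.erase d, σ.dfn j (c.2 j)) * defUtilPure c d))
          else 0) := by
        refine Finset.sum_congr rfl fun c _ => ?_
        rw [Finset.sum_ite_eq]
        simp only [Finset.mem_univ, if_true]
        unfold MixedProfile.configProb
        rw [← Finset.mul_prod_erase Finset.univ (fun j => τ.dfn j (c.2 j))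
          (Finset.mem_univ d)]
        have h1 : ∀ j' ∈ Finset.univ.erase d,
            τ.dfn j' (c.2 j') = σ.dfn j' (c.2 j') := fun j' hj' => by
          rw [hdfn j' (Finset.ne_of_mem_erase hj')]
        rw [Finset.prod_congr rfl h1, hatk]
        ring
    _ = ∑ e : Sym2 V, τ.dfn d e * Kfun σ d e := by
        rw [Finset.sum_comm]
        refine Finset.sum_congr rfl fun e _ => ?_
        unfold Kfun
        rw [Finset.mul_sum]
        exact Finset.sum_congr rfl fun c _ => by rw [mul_ite, mul_zero]

end Aux

/-- in every Nash equilibrium of `AD_{α,δ}(G)`, the union of the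
attackers' supports is a vertex cover of the subgraph induced by the union of the
defenders' supports: every edge in the defenders' supports has an endpoint in the
attackers' supports. -/
theorem nash_attacker_supports_vertex_cover (G : SimpleGraph V)
    (hG : ∀ v : V, ∃ u, G.Adj u v) (α δ : ℕ) (hα : 1 ≤ α) (hδ : 1 ≤ δ)
    (σ : MixedProfile G α δ) (hσ : σ.IsNash) :
    ∀ e ∈ σ.dfnSupports, ∃ v ∈ σ.atkSupports, v ∈ e := by
  intro e he
  by_contra hcon
  push_neg at hcon
  -- every endpoint of `e` gets zero probability from every attacker
  have hzero : ∀ v ∈ e, ∀ i, σ.atk i v = 0 := by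
    intro v hv i
    by_contra h
    have hpos : 0 < σ.atk i v := (σ.atk_nonneg i v).lt_of_ne (Ne.symm h)
    exact hcon v (Finset.mem_filter.mpr ⟨Finset.mem_univ _, ⟨i, hpos⟩⟩) hv
  obtain ⟨j, hj⟩ : ∃ j, 0 < σ.dfn j e := (Finset.mem_filter.mp he).2
  -- choose positive-probability strategies for everyone
  have hatkpos : ∀ i : Fin α, ∃ v, 0 < σ.atk i v := by
    intro i
    by_contra h
    push_neg at h
    have hz : ∀ v, σ.atk i v = 0 := fun v => le_antisymm (h v) (σ.atk_nonneg i v)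
    have := σ.atk_sum i
    rw [Finset.sum_eq_zero fun v _ => hz v] at this
    norm_num at this
  have hdfnpos : ∀ j' : Fin δ, ∃ x, 0 < σ.dfn j' x := by
    intro j'
    by_contra h
    push_neg at h
    have hz : ∀ x, σ.dfn j' x = 0 := fun x => le_antisymm (h x) (σ.dfn_nonneg j' x)
    have := σ.dfn_sum j'
    rw [Finset.sum_eq_zero fun x _ => hz x] at this
    norm_num at this
  choose pa hpa using hatkpos
  choose pd hpd using hdfnpos
  have hα' : 0 < α := hα
  let i0 : Fin α := ⟨0, hα'⟩
  set v0 : V := pa i0 with hv0def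
  obtain ⟨u0, hu0⟩ := hG v0
  set e0 : Sym2 V := s(u0, v0) with he0def
  have he0G : e0 ∈ G.edgeSet := hu0
  have hv0e0 : v0 ∈ e0 := Sym2.mem_mk_right u0 v0
  have hne : e ≠ e0 := by
    intro h
    have : σ.atk i0 v0 = 0 := hzero v0 (h ▸ hv0e0) i0
    exact absurd this (ne_of_gt (hpa i0))
  -- the value of playing `e` is zero
  have hKe : Kfun σ j e = 0 := by
    unfold Kfun
    refine Finset.sum_eq_zero fun c _ => ?_
    split_ifs with hc
    · by_cases hA : ∃ i, c.1 i ∈ e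
      · obtain ⟨i, hi⟩ := hA
        rw [Finset.prod_eq_zero (Finset.mem_univ i) (hzero _ hi i), zero_mul]
      · push_neg at hA
        have hU : defUtilPure c j = 0 := by
          unfold MixedProfile.defUtilPure
          refine Finset.sum_eq_zero fun w hw => ?_
          rw [Finset.mem_filter] at hw
          have hwe : w ∈ e := hc ▸ hw.2
          have hcount : atkCount c w = 0 := by
            unfold MixedProfile.atkCount
            rw [Finset.card_eq_zero, Finset.filter_eq_empty_iff]
            intro i _ hiw
            exact hA i (hiw ▸ hwe)
          rw [hcount]
          simp
        rw [hU, mul_zero, mul_zero]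
    · rfl
  -- the value of playing `e0` is positive
  have hKnonneg : ∀ x : Sym2 V, 0 ≤ Kfun σ j x := by
    intro x
    unfold Kfun
    refine Finset.sum_nonneg fun c _ => ?_
    split_ifs
    · exact mul_nonneg (Finset.prod_nonneg fun i _ => σ.atk_nonneg i _)
        (mul_nonneg (Finset.prod_nonneg fun j' _ => σ.dfn_nonneg j' _)
          (defUtilPure_nonneg c j))
    · exact le_refl 0
  have hKe0 : 0 < Kfun σ j e0 := by
    set c0 : Config V α δ := (pa, fun j' => if j' = j then e0 else pd j') with hc0def
    have hc0j : c0.2 j = e0 := if_pos rfl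
    have hUpos : 0 < defUtilPure c0 j := by
      unfold MixedProfile.defUtilPure
      refine Finset.sum_pos' (fun w _ => div_nonneg (Nat.cast_nonneg _) (Nat.cast_nonneg _)) ?_
      refine ⟨v0, Finset.mem_filter.mpr ⟨Finset.mem_univ _, by rw [hc0j]; exact hv0e0⟩, ?_⟩
      have hac : 0 < atkCount c0 v0 := by
        apply Finset.card_pos.mpr
        exact ⟨i0, Finset.mem_filter.mpr ⟨Finset.mem_univ _, rfl⟩⟩
      have hdc : 0 < dfnCount c0 v0 := by
        apply Finset.card_pos.mpr
        exact ⟨j, Finset.mem_filter.mpr ⟨Finset.mem_univ _, by rw [hc0j]; exact hv0e0⟩⟩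
      exact div_pos (by exact_mod_cast hac) (by exact_mod_cast hdc)
    unfold Kfun
    refine Finset.sum_pos' (fun c _ => ?_) ⟨c0, Finset.mem_univ _, ?_⟩
    · split_ifs
      · exact mul_nonneg (Finset.prod_nonneg fun i _ => σ.atk_nonneg i _)
          (mul_nonneg (Finset.prod_nonneg fun j' _ => σ.dfn_nonneg j' _)
            (defUtilPure_nonneg c j))
      · exact le_refl 0
    · rw [if_pos hc0j]
      refine mul_pos (Finset.prod_pos fun i _ => hpa i) (mul_pos (Finset.prod_pos ?_) hUpos)
      intro j' hj'
      have : c0.2 j' = pd j' := if_neg (Finset.ne_of_mem_erase hj')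
      rw [this]
      exact hpd j'
  -- the deviating strategy for defender j
  set f : Sym2 V → ℝ := σ.dfn j with hfdef
  set g : Sym2 V → ℝ := fun x => if x = e then 0 else if x = e0 then f e0 + f e else f x
    with hgdef
  have hgalt : g = fun x => f x + (if x = e0 then f e else 0) - (if x = e then f e else 0) := by
    funext x
    by_cases h1 : x = e
    · subst h1
      simp [hgdef, hne]
    · by_cases h2 : x = e0 <;> simp [hgdef, h1, h2, Ne.symm hne]
  have hgsum : ∑ x : Sym2 V, g x = 1 := by
    rw [hgalt]
    rw [Finset.sum_sub_distrib, Finset.sum_add_distrib, Finset.sum_ite_eq' Finset.univ e0,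
      Finset.sum_ite_eq' Finset.univ e]
    simp [hfdef, σ.dfn_sum j]
  have hgnonneg : ∀ x, 0 ≤ g x := by
    intro x
    rw [hgdef]
    dsimp only
    split_ifs
    · exact le_rfl
    · exact add_nonneg (σ.dfn_nonneg j e0) (σ.dfn_nonneg j e)
    · exact σ.dfn_nonneg j x
  have hgedge : ∀ x, x ∉ G.edgeSet → g x = 0 := by
    intro x hx
    rw [hgdef]
    dsimp only
    split_ifs with hx1 hx2
    · rfl
    · exact absurd (hx2 ▸ he0G) hx
    · exact σ.dfn_edge j x hx
  let τ : MixedProfile G α δ :=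
    { atk := σ.atk
      dfn := fun j' => if j' = j then g else σ.dfn j'
      atk_nonneg := σ.atk_nonneg
      atk_sum := σ.atk_sum
      dfn_nonneg := by
        intro j' x
        by_cases h : j' = j
        · simp only [h, if_pos rfl]
          exact hgnonneg x
        · simp only [if_neg h]
          exact σ.dfn_nonneg j' x
      dfn_edge := by
        intro j' x hx
        by_cases h : j' = j
        · simp only [h, if_pos rfl]
          exact hgedge x hx
        · simp only [if_neg h]
          exact σ.dfn_edge j' x hx
      dfn_sum := by
        intro j'
        by_cases h : j' = j
        · simp only [h, if_pos rfl]
          exact hgsum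
        · simp only [if_neg h]
          exact σ.dfn_sum j' }
  have hτdfn : ∀ j', j' ≠ j → τ.dfn j' = σ.dfn j' := fun j' hj' => if_neg hj'
  have hle := hσ.2 τ j rfl hτdfn
  have h1 : τ.expDefUtil j = ∑ x : Sym2 V, g x * Kfun σ j x := by
    rw [expDefUtil_eq_sum σ τ j rfl hτdfn]
    refine Finset.sum_congr rfl fun x _ => ?_
    have : τ.dfn j = g := if_pos rfl
    rw [this]
  have h2 : σ.expDefUtil j = ∑ x : Sym2 V, σ.dfn j x * Kfun σ j x :=
    expDefUtil_eq_sum σ σ j rfl fun _ _ => rfl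
  have hdiff : ∑ x : Sym2 V, g x * Kfun σ j x
      = (∑ x : Sym2 V, σ.dfn j x * Kfun σ j x) + f e * Kfun σ j e0 - f e * Kfun σ j e := by
    rw [hgalt]
    simp only [add_mul, sub_mul, ite_mul, zero_mul]
    rw [Finset.sum_sub_distrib, Finset.sum_add_distrib, Finset.sum_ite_eq' Finset.univ e0,
      Finset.sum_ite_eq' Finset.univ e]
    simp [hfdef]
  rw [h1, h2, hdiff, hKe, mul_zero, sub_zero] at hle
  have hp : 0 < f e := hj
  nlinarith [mul_pos hp hKe0]
end

section
/- In every Nash equilibrium σ of AD_{α,δ}(G), the total expected utility of the defenders satisfies Σ_{d∈[δ]} U_d(σ) = α · MinHit_σ. -/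
open Finset
open scoped Classical

variable {V : Type*} [Fintype V] [DecidableEq V]

open MixedProfile

set_option linter.unusedSectionVars false

namespace ADAux

variable {G : SimpleGraph V} {α δ : ℕ}

lemma atkUtilPure_eq_prod (c : Config V α δ) (a : Fin α) :
    atkUtilPure c a = ∏ j, (if c.1 a ∈ c.2 j then (0:ℝ) else 1) := by
  unfold atkUtilPure
  by_cases h : ∃ j, c.1 a ∈ c.2 j
  · obtain ⟨j, hj⟩ := h
    rw [if_pos ⟨j, hj⟩]
    exact (Finset.prod_eq_zero (Finset.mem_univ j)
      (if_pos hj : (if c.1 a ∈ c.2 j then (0:ℝ) else 1) = 0)).symm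
  · rw [if_neg h]
    exact (Finset.prod_eq_one fun j _ => if_neg (fun hj => h ⟨j, hj⟩)).symm

lemma sum_dfn_ite (σ : MixedProfile G α δ) (j : Fin δ) (v : V) :
    ∑ e : Sym2 V, σ.dfn j e * (if v ∈ e then (0:ℝ) else 1) =
      1 - fracDeg (σ.dfn j) v := by
  have h1 : ∀ e : Sym2 V, σ.dfn j e * (if v ∈ e then (0:ℝ) else 1) =
      (if ¬ v ∈ e then σ.dfn j e else 0) := by
    intro e; by_cases h : v ∈ e <;> simp [h]
  rw [Finset.sum_congr rfl (fun e _ => h1 e), ← Finset.sum_filter]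
  have := Finset.sum_filter_add_sum_filter_not Finset.univ
    (fun e : Sym2 V => v ∈ e) (σ.dfn j)
  rw [σ.dfn_sum j] at this
  rw [fracDeg]
  linarith

lemma expAtkUtil_eq (σ : MixedProfile G α δ) (a : Fin α) :
    σ.expAtkUtil a = ∑ v : V, σ.atk a v * ∏ j, (1 - fracDeg (σ.dfn j) v) := by
  set H : V → ℝ := fun v => ∏ j, (1 - fracDeg (σ.dfn j) v) with hH
  have step1 : σ.expAtkUtil a
      = ∑ f : Fin α → V, (∏ i, σ.atk i (f i)) * H (f a) := by
    rw [expAtkUtil, Fintype.sum_prod_type]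
    refine Finset.sum_congr rfl fun f _ => ?_
    have : ∀ g : Fin δ → Sym2 V,
        σ.configProb (f, g) * atkUtilPure (f, g) a
        = (∏ i, σ.atk i (f i)) *
          ∏ j, (σ.dfn j (g j) * (if f a ∈ g j then (0:ℝ) else 1)) := by
      intro g
      simp only [configProb, atkUtilPure_eq_prod]
      rw [mul_assoc, ← Finset.prod_mul_distrib]
    rw [Finset.sum_congr rfl (fun g _ => this g), ← Finset.mul_sum]
    congr 1
    have := Finset.prod_univ_sum (fun _ : Fin δ => (Finset.univ : Finset (Sym2 V)))
      (fun j e => σ.dfn j e * (if f a ∈ e then (0:ℝ) else 1))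
    rw [Fintype.piFinset_univ] at this
    rw [← this]
    rw [hH]
    exact Finset.prod_congr rfl fun j _ => sum_dfn_ite σ j (f a)
  rw [step1]
  have step2 : ∀ f : Fin α → V, (∏ i, σ.atk i (f i)) * H (f a)
      = ∏ i, (σ.atk i (f i) * if i = a then H (f i) else 1) := by
    intro f
    rw [Finset.prod_mul_distrib, Finset.prod_ite_eq' Finset.univ a (fun i => H (f i)),
      if_pos (Finset.mem_univ a)]
  rw [Finset.sum_congr rfl (fun f _ => step2 f)]
  have := Finset.prod_univ_sum (fun _ : Fin α => (Finset.univ : Finset V))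
    (fun i v => σ.atk i v * if i = a then H v else 1)
  rw [Fintype.piFinset_univ] at this
  rw [← this]
  rw [Finset.prod_eq_single a
    (fun i _ hi => by simp [hi, σ.atk_sum i])
    (fun h => absurd (Finset.mem_univ a) h)]
  simp [H]

lemma sum_configProb (σ : MixedProfile G α δ) :
    ∑ c : Config V α δ, σ.configProb c = 1 := by
  rw [show (∑ c : Config V α δ, σ.configProb c)
      = ∑ f : Fin α → V, ∑ g : Fin δ → Sym2 V,
          (∏ i, σ.atk i (f i)) * ∏ j, σ.dfn j (g j) from
    Fintype.sum_prod_type _]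
  rw [← Finset.sum_mul_sum]
  have h1 := Finset.prod_univ_sum (fun _ : Fin α => (Finset.univ : Finset V))
    (fun i v => σ.atk i v)
  have h2 := Finset.prod_univ_sum (fun _ : Fin δ => (Finset.univ : Finset (Sym2 V)))
    (fun j e => σ.dfn j e)
  rw [Fintype.piFinset_univ] at h1 h2
  rw [← h1, ← h2]
  simp [σ.atk_sum, σ.dfn_sum]

lemma sum_defUtilPure (c : Config V α δ) :
    ∑ d : Fin δ, defUtilPure c d = ∑ a : Fin α, (1 - atkUtilPure c a) := by
  have key : ∀ w : V, ((dfnCount c w : ℝ)) * ((atkCount c w : ℝ) / (dfnCount c w : ℝ))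
      = if dfnCount c w = 0 then 0 else (atkCount c w : ℝ) := by
    intro w
    by_cases h : dfnCount c w = 0
    · simp [h]
    · rw [if_neg h]
      field_simp
  have lhs : ∑ d : Fin δ, defUtilPure c d
      = ∑ w : V, if dfnCount c w = 0 then 0 else (atkCount c w : ℝ) := by
    unfold defUtilPure
    rw [Finset.sum_congr rfl (fun d _ => Finset.sum_filter _ _)]
    rw [Finset.sum_comm]
    refine Finset.sum_congr rfl fun w _ => ?_
    rw [← key w]
    rw [← Finset.sum_filter]
    rw [Finset.sum_const, nsmul_eq_mul]
    rfl
  have rhs : ∑ a : Fin α, (1 - atkUtilPure c a)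
      = ∑ w : V, if dfnCount c w = 0 then 0 else (atkCount c w : ℝ) := by
    have h1 : ∀ a : Fin α, (1 - atkUtilPure c a)
        = if dfnCount c (c.1 a) = 0 then 0 else (1:ℝ) := by
      intro a
      unfold atkUtilPure
      have hiff : (∃ j, c.1 a ∈ c.2 j) ↔ ¬ dfnCount c (c.1 a) = 0 := by
        simp [dfnCount, Finset.card_eq_zero, Finset.filter_eq_empty_iff]
      by_cases h : dfnCount c (c.1 a) = 0
      · rw [if_pos h, if_neg (fun he => (hiff.mp he) h)]; ring
      · rw [if_neg h, if_pos (hiff.mpr h)]; ring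
    rw [Finset.sum_congr rfl (fun a _ => h1 a)]
    rw [← Fintype.sum_fiberwise (fun a : Fin α => c.1 a)
      (fun a => if dfnCount c (c.1 a) = 0 then (0:ℝ) else 1)]
    refine Finset.sum_congr rfl fun w _ => ?_
    have h2 : ∀ a : {a : Fin α // c.1 a = w},
        (if dfnCount c (c.1 (a : Fin α)) = 0 then (0:ℝ) else 1)
        = (if dfnCount c w = 0 then (0:ℝ) else 1) := by
      intro a; rw [a.2]
    rw [Finset.sum_congr rfl (fun a _ => h2 a), Finset.sum_const, Finset.card_univ,
      nsmul_eq_mul]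
    have h3 : Fintype.card {a : Fin α // c.1 a = w} = atkCount c w := by
      rw [atkCount, Fintype.card_subtype]
    rw [h3]
    by_cases h : dfnCount c w = 0 <;> simp [h]
  rw [lhs, rhs]


lemma nash_atk_val [Nonempty V] (σ : MixedProfile G α δ) (hσ : σ.IsNash) (a : Fin α) :
    σ.expAtkUtil a = 1 - σ.minHit := by
  have hle : ∀ v : V, σ.minHit ≤ σ.hitProb v := fun v =>
    Finset.inf'_le _ (Finset.mem_univ v)
  have hprod : ∀ v : V, (∏ j, (1 - fracDeg (σ.dfn j) v)) = 1 - σ.hitProb v := by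
    intro v; rw [MixedProfile.hitProb]; ring
  have upper : σ.expAtkUtil a ≤ 1 - σ.minHit := by
    rw [expAtkUtil_eq]
    calc ∑ v : V, σ.atk a v * ∏ j, (1 - fracDeg (σ.dfn j) v)
        ≤ ∑ v : V, σ.atk a v * (1 - σ.minHit) := by
          refine Finset.sum_le_sum fun v _ => ?_
          refine mul_le_mul_of_nonneg_left ?_ (σ.atk_nonneg a v)
          rw [hprod v]; linarith [hle v]
      _ = 1 - σ.minHit := by rw [← Finset.sum_mul, σ.atk_sum a, one_mul]
  obtain ⟨v0, _, hv0⟩ := Finset.exists_mem_eq_inf' (Finset.univ_nonempty) σ.hitProb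
  set τ : MixedProfile G α δ :=
    { atk := fun i => if i = a then (fun v => if v = v0 then 1 else 0) else σ.atk i
      dfn := σ.dfn
      atk_nonneg := by
        intro i v
        by_cases h : i = a
        · simp only [h, if_pos rfl]
          by_cases h2 : v = v0 <;> simp [h2]
        · simp only [if_neg h]; exact σ.atk_nonneg i v
      atk_sum := by
        intro i
        by_cases h : i = a
        · simp [h]
        · simp [h, σ.atk_sum i]
      dfn_nonneg := σ.dfn_nonneg
      dfn_edge := σ.dfn_edge
      dfn_sum := σ.dfn_sum } with hτ
  have hval : τ.expAtkUtil a = 1 - σ.minHit := by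
    rw [expAtkUtil_eq]
    have hterm : ∀ v : V, τ.atk a v * ∏ j, (1 - fracDeg (τ.dfn j) v)
        = if v = v0 then (∏ j, (1 - fracDeg (σ.dfn j) v)) else 0 := by
      intro v
      simp only [hτ, if_pos rfl]
      by_cases h : v = v0 <;> simp [h]
    rw [Finset.sum_congr rfl (fun v _ => hterm v),
      Finset.sum_ite_eq' Finset.univ v0 (fun v => ∏ j, (1 - fracDeg (σ.dfn j) v)),
      if_pos (Finset.mem_univ v0), hprod v0, MixedProfile.minHit, hv0]
  have lower := hσ.1 τ a (fun i hi => by simp [hτ, hi]) rfl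
  rw [hval] at lower
  linarith

end ADAux


/-- in every Nash equilibrium of `AD_{α,δ}(G)`, the total expected
utility of the defenders equals `α · MinHit_σ`. -/
theorem nash_total_defender_utility (G : SimpleGraph V) [Nonempty V]
    (hG : ∀ v : V, ∃ u, G.Adj u v) (α δ : ℕ) (hα : 1 ≤ α) (hδ : 1 ≤ δ)
    (σ : MixedProfile G α δ) (hσ : σ.IsNash) :
    ∑ d : Fin δ, σ.expDefUtil d = (α : ℝ) * σ.minHit := by
  have h1 : ∑ d : Fin δ, σ.expDefUtil d
      = (α : ℝ) - ∑ a : Fin α, σ.expAtkUtil a := by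
    unfold MixedProfile.expDefUtil
    rw [Finset.sum_comm]
    have hstep : ∀ c : Config V α δ, ∑ d : Fin δ, σ.configProb c * defUtilPure c d
        = (α : ℝ) * σ.configProb c - ∑ a : Fin α, σ.configProb c * atkUtilPure c a := by
      intro c
      rw [← Finset.mul_sum, ADAux.sum_defUtilPure c, Finset.sum_sub_distrib, Finset.sum_const,
        Finset.card_univ, Fintype.card_fin, nsmul_eq_mul, mul_one, mul_sub, Finset.mul_sum,
        mul_comm (σ.configProb c) ((α : ℝ))]
    rw [Finset.sum_congr rfl (fun c _ => hstep c), Finset.sum_sub_distrib, ← Finset.mul_sum,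
      ADAux.sum_configProb, mul_one]
    congr 1
    rw [Finset.sum_comm]
    rfl
  rw [h1, Finset.sum_congr rfl (fun a _ => ADAux.nash_atk_val σ hσ a), Finset.sum_const,
    Finset.card_univ, Fintype.card_fin, nsmul_eq_mul]
  ring
end

section
/- Assume that |V|/2 < δ < β'(G), where β'(G) is the minimum size of an edge cover of G. Then AD_{α,δ}(G) has no Defense-Optimal Nash equilibrium, i.e., no Nash equilibrium σ with DR_σ = max{1, |V|/(2δ)}. -/
open Finset
open scoped Classical

variable {V : Type*} [Fintype V] [DecidableEq V]

open MixedProfile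

section AuxLemmas

namespace MixedProfile

variable {G : SimpleGraph V} {α δ : ℕ}

lemma fracDeg_nonneg' (σ : MixedProfile G α δ) (j : Fin δ) (v : V) :
    0 ≤ fracDeg (σ.dfn j) v :=
  Finset.sum_nonneg fun e _ => σ.dfn_nonneg j e

lemma fracDeg_le_one' (σ : MixedProfile G α δ) (j : Fin δ) (v : V) :
    fracDeg (σ.dfn j) v ≤ 1 := by
  rw [← σ.dfn_sum j]
  exact Finset.sum_le_sum_of_subset_of_nonneg (Finset.filter_subset _ _)
    (fun e _ _ => σ.dfn_nonneg j e)

lemma configProb_nonneg (σ : MixedProfile G α δ) (c : Config V α δ) :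
    0 ≤ σ.configProb c :=
  mul_nonneg (Finset.prod_nonneg fun i _ => σ.atk_nonneg i _)
    (Finset.prod_nonneg fun j _ => σ.dfn_nonneg j _)

lemma atkUtilPure_nonneg (c : Config V α δ) (a : Fin α) : 0 ≤ atkUtilPure c a := by
  unfold atkUtilPure; split <;> norm_num

lemma expAtkUtil_nonneg (σ : MixedProfile G α δ) (a : Fin α) : 0 ≤ σ.expAtkUtil a :=
  Finset.sum_nonneg fun c _ => mul_nonneg (configProb_nonneg σ c) (atkUtilPure_nonneg c a)

lemma atkUtilPure_eq_prod (c : Config V α δ) (a : Fin α) :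
    atkUtilPure c a = ∏ j, (if c.1 a ∈ c.2 j then (0:ℝ) else 1) := by
  unfold atkUtilPure
  by_cases h : ∃ j, c.1 a ∈ c.2 j
  · obtain ⟨j, hj⟩ := h
    rw [if_pos ⟨j, hj⟩, eq_comm]
    exact Finset.prod_eq_zero (Finset.mem_univ j) (if_pos hj)
  · rw [if_neg h, eq_comm]
    exact Finset.prod_eq_one fun j _ => if_neg (fun hj => h ⟨j, hj⟩)

lemma atkUtilPure_eq_ite (c : Config V α δ) (a : Fin α) :
    atkUtilPure c a = if dfnCount c (c.1 a) = 0 then 1 else 0 := by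
  unfold atkUtilPure dfnCount
  have hiff : (Finset.univ.filter (fun j : Fin δ => c.1 a ∈ c.2 j)).card = 0 ↔
      ¬ ∃ j, c.1 a ∈ c.2 j := by
    simp [Finset.card_eq_zero, Finset.filter_eq_empty_iff]
  by_cases h : ∃ j, c.1 a ∈ c.2 j
  · rw [if_pos h, if_neg (fun h0 => (hiff.mp h0) h)]
  · rw [if_neg h, if_pos (hiff.mpr h)]

lemma sum_defUtilPure (c : Config V α δ) :
    ∑ d, defUtilPure c d
      = ∑ w : V, if dfnCount c w = 0 then 0 else (atkCount c w : ℝ) := by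
  unfold defUtilPure
  simp_rw [Finset.sum_filter]
  rw [Finset.sum_comm]
  refine Finset.sum_congr rfl fun w _ => ?_
  rw [← Finset.sum_filter, Finset.sum_const, nsmul_eq_mul]
  have hD : (Finset.univ.filter (fun j : Fin δ => w ∈ c.2 j)).card = dfnCount c w := rfl
  rw [hD]
  by_cases h : dfnCount c w = 0
  · rw [if_pos h, h]; simp
  · rw [if_neg h, mul_comm, div_mul_cancel₀ _ (Nat.cast_ne_zero.mpr h)]

lemma sum_atkUtilPure (c : Config V α δ) :
    ∑ a, atkUtilPure c a
      = ∑ w : V, if dfnCount c w = 0 then (atkCount c w : ℝ) else 0 := by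
  simp_rw [atkUtilPure_eq_ite]
  rw [← Finset.sum_fiberwise' Finset.univ c.1
    (fun w => if dfnCount c w = 0 then (1:ℝ) else 0)]
  refine Finset.sum_congr rfl fun w _ => ?_
  rw [Finset.sum_const, nsmul_eq_mul]
  have hA : (Finset.univ.filter (fun a : Fin α => c.1 a = w)).card = atkCount c w := rfl
  rw [hA]
  by_cases h : dfnCount c w = 0 <;> simp [h]

lemma sum_atkCount (c : Config V α δ) : ∑ w : V, (atkCount c w : ℝ) = α := by
  have h := Finset.sum_fiberwise' Finset.univ c.1 (fun _ : V => (1:ℝ))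
  simp only [Finset.sum_const, nsmul_eq_mul, mul_one] at h
  have : ∑ w : V, (atkCount c w : ℝ)
      = ∑ w : V, ((Finset.univ.filter (fun a : Fin α => c.1 a = w)).card : ℝ) := rfl
  rw [this, h]
  simp

lemma pure_sum (c : Config V α δ) :
    ∑ d, defUtilPure c d + ∑ a, atkUtilPure c a = α := by
  rw [sum_defUtilPure, sum_atkUtilPure, ← Finset.sum_add_distrib, ← sum_atkCount c]
  refine Finset.sum_congr rfl fun w _ => ?_
  by_cases h : dfnCount c w = 0 <;> simp [h]

lemma sum_configProb (σ : MixedProfile G α δ) :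
    ∑ c : Config V α δ, σ.configProb c = 1 := by
  unfold configProb
  rw [Fintype.sum_prod_type]
  have h1 : ∑ f : Fin α → V, ∏ i, σ.atk i (f i) = 1 := by
    rw [← Fintype.prod_sum]
    simp [σ.atk_sum]
  have h2 : ∑ g : Fin δ → Sym2 V, ∏ j, σ.dfn j (g j) = 1 := by
    rw [← Fintype.prod_sum]
    simp [σ.dfn_sum]
  calc ∑ f : Fin α → V, ∑ g : Fin δ → Sym2 V,
        (∏ i, σ.atk i (f i)) * ∏ j, σ.dfn j (g j)
      = ∑ f : Fin α → V, (∏ i, σ.atk i (f i)) *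
          ∑ g : Fin δ → Sym2 V, ∏ j, σ.dfn j (g j) := by
        simp_rw [Finset.mul_sum]
    _ = 1 := by rw [h2]; simp_rw [mul_one]; exact h1

lemma sum_util (σ : MixedProfile G α δ) :
    ∑ d, σ.expDefUtil d + ∑ a, σ.expAtkUtil a = α := by
  have h1 : ∑ d, σ.expDefUtil d
      = ∑ c : Config V α δ, σ.configProb c * ∑ d, defUtilPure c d := by
    unfold expDefUtil; rw [Finset.sum_comm]; simp_rw [Finset.mul_sum]
  have h2 : ∑ a, σ.expAtkUtil a
      = ∑ c : Config V α δ, σ.configProb c * ∑ a, atkUtilPure c a := by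
    unfold expAtkUtil; rw [Finset.sum_comm]; simp_rw [Finset.mul_sum]
  rw [h1, h2, ← Finset.sum_add_distrib]
  simp_rw [← mul_add, pure_sum]
  rw [← Finset.sum_mul, sum_configProb, one_mul]

lemma expAtkUtil_eq (σ : MixedProfile G α δ) (a : Fin α) :
    σ.expAtkUtil a = ∑ v, σ.atk a v * ∏ j, (1 - fracDeg (σ.dfn j) v) := by
  unfold expAtkUtil
  simp_rw [atkUtilPure_eq_prod]
  unfold configProb
  rw [Fintype.sum_prod_type]
  have key : ∀ f : Fin α → V,
      (∑ g : Fin δ → Sym2 V, ((∏ i, σ.atk i (f i)) * ∏ j, σ.dfn j (g j)) *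
          ∏ j, (if f a ∈ g j then (0:ℝ) else 1))
        = (∏ i, σ.atk i (f i)) * ∏ j, (1 - fracDeg (σ.dfn j) (f a)) := by
    intro f
    have hg : ∀ g : Fin δ → Sym2 V,
        ((∏ i, σ.atk i (f i)) * ∏ j, σ.dfn j (g j)) *
            ∏ j, (if f a ∈ g j then (0:ℝ) else 1)
          = (∏ i, σ.atk i (f i)) *
            ∏ j, (σ.dfn j (g j) * if f a ∈ g j then (0:ℝ) else 1) := by
      intro g; rw [mul_assoc, ← Finset.prod_mul_distrib]
    simp_rw [hg, ← Finset.mul_sum]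
    congr 1
    refine (Fintype.prod_sum
      (fun (j : Fin δ) (e : Sym2 V) => σ.dfn j e * if f a ∈ e then (0:ℝ) else 1)).symm.trans ?_
    refine Finset.prod_congr rfl fun j _ => ?_
    have he : ∀ e : Sym2 V, σ.dfn j e * (if f a ∈ e then (0:ℝ) else 1)
        = σ.dfn j e - (if f a ∈ e then σ.dfn j e else 0) := by
      intro e; split <;> ring
    simp_rw [he]
    rw [Finset.sum_sub_distrib, σ.dfn_sum, ← Finset.sum_filter]
    rfl
  simp_rw [key]
  set Φ : V → ℝ := fun v => ∏ j, (1 - fracDeg (σ.dfn j) v) with hΦ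
  have step : ∀ f : Fin α → V,
      (∏ i, σ.atk i (f i)) * Φ (f a)
        = ∏ i, (Function.update σ.atk a (fun v => σ.atk a v * Φ v)) i (f i) := by
    intro f
    have h1 : ∏ i ∈ ({a}ᶜ : Finset (Fin α)),
        (Function.update σ.atk a (fun v => σ.atk a v * Φ v)) i (f i)
        = ∏ i ∈ ({a}ᶜ : Finset (Fin α)), σ.atk i (f i) := by
      refine Finset.prod_congr rfl fun i hi => ?_
      rw [Function.update_of_ne (by simpa using hi)]
    rw [Fintype.prod_eq_mul_prod_compl a
        (fun i => (Function.update σ.atk a (fun v => σ.atk a v * Φ v)) i (f i)),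
      Fintype.prod_eq_mul_prod_compl a (fun i => σ.atk i (f i)), h1,
      Function.update_self]
    ring
  simp_rw [show ∀ f : Fin α → V, (∏ i, σ.atk i (f i)) * ∏ j, (1 - fracDeg (σ.dfn j) (f a))
      = ∏ i, (Function.update σ.atk a (fun v => σ.atk a v * Φ v)) i (f i) from step]
  rw [← Fintype.prod_sum]
  rw [Finset.prod_eq_single a (fun i _ hi => by
    rw [show (∑ v, (Function.update σ.atk a (fun v => σ.atk a v * Φ v)) i v)
        = ∑ v, σ.atk i v from Finset.sum_congr rfl fun v _ => by
          rw [Function.update_of_ne hi], σ.atk_sum i])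
    (fun h => absurd (Finset.mem_univ a) h)]
  exact Finset.sum_congr rfl fun v _ => by rw [Function.update_self]

/-- The profile obtained from `σ` by making attacker `a` choose vertex `u`. -/
noncomputable def pointAtk (σ : MixedProfile G α δ) (a : Fin α) (u : V) :
    MixedProfile G α δ where
  atk := Function.update σ.atk a (fun v => if v = u then 1 else 0)
  dfn := σ.dfn
  atk_nonneg := by
    intro i v
    rcases eq_or_ne i a with rfl | h
    · rw [Function.update_self]; split <;> norm_num
    · rw [Function.update_of_ne h]; exact σ.atk_nonneg i v
  atk_sum := by
    intro i
    rcases eq_or_ne i a with rfl | h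
    · rw [Function.update_self]; simp
    · rw [Function.update_of_ne h]; exact σ.atk_sum i
  dfn_nonneg := σ.dfn_nonneg
  dfn_edge := σ.dfn_edge
  dfn_sum := σ.dfn_sum

end MixedProfile

end AuxLemmas

/-- assume `|V|/2 < δ < β'(G)`. Then `AD_{α,δ}(G)` has no Defense-Optimal
Nash equilibrium, i.e. no Nash equilibrium `σ` with `DR_σ = max {1, |V|/(2δ)}`. -/
theorem no_defense_optimal_many_defenders (G : SimpleGraph V)
    (hG : ∀ v : V, ∃ u, G.Adj u v) (α δ : ℕ) (hα : 1 ≤ α) (hδ : 1 ≤ δ)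
    (hlow : (Fintype.card V : ℝ) / 2 < (δ : ℝ)) (hhigh : δ < edgeCoverNumber G) :
    ¬ ∃ σ : MixedProfile G α δ, σ.IsNash ∧
        σ.defenseRatio = max 1 ((Fintype.card V : ℝ) / (2 * δ)) := by
  rintro ⟨σ, hnash, hopt⟩
  have hδ0 : (0:ℝ) < δ := by exact_mod_cast hδ
  have hmax : max 1 ((Fintype.card V : ℝ) / (2 * δ)) = 1 := by
    rw [max_eq_left]
    rw [div_le_one (by positivity)]
    linarith
  rw [hmax] at hopt
  unfold MixedProfile.defenseRatio at hopt
  set S := ∑ d, σ.expDefUtil d with hSdef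
  have hSne : S ≠ 0 := by
    intro h; rw [h, div_zero] at hopt; norm_num at hopt
  have hSα : S = α := ((div_eq_one_iff_eq hSne).mp hopt).symm
  have hsum0 : ∑ a, σ.expAtkUtil a = 0 := by
    have h := sum_util σ
    rw [← hSdef] at h
    linarith
  have a0 : Fin α := ⟨0, hα⟩
  have hA0 : σ.expAtkUtil a0 = 0 :=
    (Finset.sum_eq_zero_iff_of_nonneg
      (fun a _ => expAtkUtil_nonneg σ a)).mp hsum0 a0 (Finset.mem_univ _)
  -- every vertex is fully covered by some defender
  have hΦ : ∀ u : V, ∃ j : Fin δ, fracDeg (σ.dfn j) u = 1 := by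
    intro u
    have hle := hnash.1 (σ.pointAtk a0 u) a0
      (fun i hi => Function.update_of_ne hi _ _) rfl
    rw [expAtkUtil_eq] at hle
    have hdfn : (σ.pointAtk a0 u).dfn = σ.dfn := rfl
    rw [hdfn] at hle
    have hatk : (σ.pointAtk a0 u).atk a0 = fun v => if v = u then (1:ℝ) else 0 :=
      Function.update_self _ _ _
    rw [hatk] at hle
    simp_rw [ite_mul, one_mul, zero_mul] at hle
    rw [Finset.sum_ite_eq' Finset.univ u
      (fun v => ∏ j, (1 - fracDeg (σ.dfn j) v)), if_pos (Finset.mem_univ u),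
      hA0] at hle
    have hge : 0 ≤ ∏ j, (1 - fracDeg (σ.dfn j) u) :=
      Finset.prod_nonneg fun j _ => by linarith [σ.fracDeg_le_one' j u]
    have h0 : ∏ j, (1 - fracDeg (σ.dfn j) u) = 0 := le_antisymm hle hge
    obtain ⟨j, _, hj⟩ := Finset.prod_eq_zero_iff.mp h0
    exact ⟨j, by linarith⟩
  -- each defender has a support edge
  have hex : ∀ j : Fin δ, ∃ e : Sym2 V, 0 < σ.dfn j e := by
    intro j
    by_contra h
    push_neg at h
    have h1 : ∑ e : Sym2 V, σ.dfn j e ≤ 0 := Finset.sum_nonpos fun e _ => h e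
    rw [σ.dfn_sum j] at h1
    norm_num at h1
  choose ec hec using hex
  -- each support edge of a "full" defender contains the vertex
  have hcontain : ∀ (u : V) (j : Fin δ), fracDeg (σ.dfn j) u = 1 →
      ∀ e : Sym2 V, 0 < σ.dfn j e → u ∈ e := by
    intro u j hj e he
    by_contra hue
    have hsplit := Finset.sum_filter_add_sum_filter_not Finset.univ
      (fun e : Sym2 V => u ∈ e) (σ.dfn j)
    rw [σ.dfn_sum j] at hsplit
    have h1 : fracDeg (σ.dfn j) u
        = ∑ e ∈ Finset.univ.filter (fun e : Sym2 V => u ∈ e), σ.dfn j e := rfl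
    have h2 : ∑ e ∈ Finset.univ.filter (fun e : Sym2 V => ¬ u ∈ e), σ.dfn j e = 0 := by
      rw [h1] at hj; linarith
    have h3 := (Finset.sum_eq_zero_iff_of_nonneg
      (fun e _ => σ.dfn_nonneg j e)).mp h2 e (by simp [hue])
    rw [h3] at he
    exact lt_irrefl 0 he
  -- build an edge cover of size ≤ δ
  set F : Finset (Sym2 V) := Finset.univ.image ec with hF
  have hcover : IsEdgeCover G F := by
    constructor
    · intro x hx
      simp only [hF, Finset.coe_image, Set.mem_image, Finset.mem_coe] at hx
      obtain ⟨j, _, rfl⟩ := hx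
      by_contra hne
      have hpos := hec j
      rw [σ.dfn_edge j _ hne] at hpos
      exact lt_irrefl 0 hpos
    · intro v
      obtain ⟨j, hj⟩ := hΦ v
      exact ⟨ec j, Finset.mem_image_of_mem ec (Finset.mem_univ j),
        hcontain v j hj (ec j) (hec j)⟩
  have hle : edgeCoverNumber G ≤ F.card :=
    Nat.sInf_le ⟨F, hcover, rfl⟩
  have hcard : F.card ≤ δ := by
    calc F.card ≤ (Finset.univ : Finset (Fin δ)).card := Finset.card_image_le
    _ = δ := by simp
  omega
end
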